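/- Let n ≥ 2, let a ∈ 𝔹ⁿ and let f : 𝔹ⁿ∖{0} → 𝔹ⁿ∖{a} be (the restriction of) a Möbius transformation of ℝⁿ∪{∞} mapping the unit ball 𝔹ⁿ onto itself, with f(0) = a and f(𝔹ⁿ∖{0}) = 𝔹ⁿ∖{a}. Then for all x, y ∈ 𝔹ⁿ∖{0}: ((1−|a|)/(1+|a|)) · c_{𝔹ⁿ∖{0}}(x,y) ≤ c_{𝔹ⁿ∖{a}}(f(x), f(y)) ≤ ((1+|a|)/(1−|a|)) · c_{𝔹ⁿ∖{0}}(x,y). -/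

import Mathlib

open Metric Set OnePoint
open scoped RealInnerProductSpace

/-- Euclidean `n`-space. -/
abbrev E (n : ℕ) := EuclideanSpace ℝ (Fin n)

/-- The Cassinian metric of a domain `D`:
`c_D(x,y) = sup_{p ∈ ∂D} |x-y| / (|x-p| |p-y|)`. -/
noncomputable def cassinian {n : ℕ} (D : Set (E n)) (x y : E n) : ℝ :=
  ⨆ p ∈ frontier D, dist x y / (dist x p * dist p y)

open Classical in
/-- Inversion in the sphere `S^{n-1}(c, R)`, as a self-map of `ℝⁿ ∪ {∞}`. -/
noncomputable def sphereInv {n : ℕ} (c : E n) (R : ℝ) (z : OnePoint (E n)) : OnePoint (E n) :=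
  match z with
  | OnePoint.infty => (c : OnePoint (E n))
  | OnePoint.some x => if x = c then (∞ : OnePoint (E n))
      else ((c + (R ^ 2 / ‖x - c‖ ^ 2) • (x - c) : E n) : OnePoint (E n))

/-- Reflection in the hyperplane `{x : ⟪x, u⟫ = d}` (where `u ≠ 0`),
as a self-map of `ℝⁿ ∪ {∞}`. -/
noncomputable def hypRefl {n : ℕ} (u : E n) (d : ℝ) (z : OnePoint (E n)) : OnePoint (E n) :=
  match z with
  | OnePoint.infty => (∞ : OnePoint (E n))
  | OnePoint.some x => ((x - ((2 * (⟪x, u⟫ - d)) / ‖u‖ ^ 2) • u : E n) : OnePoint (E n))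

/-- Möbius transformations of `ℝⁿ ∪ {∞}`: the group generated by inversions in spheres
and reflections in hyperplanes.  Since all the generators are involutions, the generated
group consists exactly of the finite compositions of generators. -/
inductive IsMobius (n : ℕ) : (OnePoint (E n) → OnePoint (E n)) → Prop where
  | inv (c : E n) (R : ℝ) (hR : 0 < R) : IsMobius n (sphereInv c R)
  | refl (u : E n) (d : ℝ) (hu : u ≠ 0) : IsMobius n (hypRefl u d)
  | comp (f g : OnePoint (E n) → OnePoint (E n)) :
      IsMobius n f → IsMobius n g → IsMobius n (f ∘ g)

namespace CassinianAux

open EuclideanGeometry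

variable {n : ℕ}

noncomputable def sq1 (x : E n) : ℝ := Real.sqrt (1 + ‖x‖ ^ 2)

lemma sq1_pos (x : E n) : 0 < sq1 x := Real.sqrt_pos.2 (by positivity)

lemma one_le_sq1 (x : E n) : 1 ≤ sq1 x := by
  rw [show (1:ℝ) = Real.sqrt 1 by simp [Real.sqrt_one]]
  exact Real.sqrt_le_sqrt (by nlinarith [sq_nonneg ‖x‖])

lemma sq1_sq (x : E n) : sq1 x ^ 2 = 1 + ‖x‖ ^ 2 := Real.sq_sqrt (by positivity)

lemma sq1_le_sqrt2 {x : E n} (h : ‖x‖ ≤ 1) : sq1 x ≤ Real.sqrt 2 :=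
  Real.sqrt_le_sqrt (by nlinarith [norm_nonneg x])

noncomputable def chord : OnePoint (E n) → OnePoint (E n) → ℝ
  | OnePoint.infty, OnePoint.infty => 0
  | OnePoint.infty, OnePoint.some y => 1 / sq1 y
  | OnePoint.some x, OnePoint.infty => 1 / sq1 x
  | OnePoint.some x, OnePoint.some y => dist x y / (sq1 x * sq1 y)

@[simp] lemma chord_coe_coe (x y : E n) :
    chord (x : OnePoint (E n)) (y : OnePoint (E n)) = dist x y / (sq1 x * sq1 y) := rfl

@[simp] lemma chord_coe_infty (x : E n) : chord (x : OnePoint (E n)) ∞ = 1 / sq1 x := rfl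

@[simp] lemma chord_infty_coe (y : E n) : chord ∞ (y : OnePoint (E n)) = 1 / sq1 y := rfl

@[simp] lemma chord_infty_infty : chord (∞ : OnePoint (E n)) ∞ = 0 := rfl

lemma norm_add_le_sq1_mul_sq1 (x y : E n) : ‖x‖ + ‖y‖ ≤ sq1 x * sq1 y := by
  have h : sq1 x * sq1 y = Real.sqrt ((1 + ‖x‖ ^ 2) * (1 + ‖y‖ ^ 2)) :=
    (Real.sqrt_mul (by positivity) _).symm
  rw [h]
  rw [Real.le_sqrt (by positivity) (by positivity)]
  nlinarith [sq_nonneg (‖x‖ * ‖y‖ - 1), norm_nonneg x, norm_nonneg y]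

lemma chord_le_one (x y : OnePoint (E n)) : chord x y ≤ 1 := by
  have h1 : ∀ z : E n, (0:ℝ) < sq1 z := sq1_pos
  cases x with
  | infty => cases y with
    | infty => norm_num [chord]
    | coe y =>
      rw [chord_infty_coe, div_le_one (sq1_pos y)]; exact one_le_sq1 y
  | coe x => cases y with
    | infty => rw [chord_coe_infty, div_le_one (sq1_pos x)]; exact one_le_sq1 x
    | coe y =>
      rw [chord_coe_coe,
        div_le_one (mul_pos (sq1_pos x) (sq1_pos y))]
      calc dist x y ≤ ‖x‖ + ‖y‖ := by
            simpa [dist_eq_norm] using norm_sub_le x y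
        _ ≤ sq1 x * sq1 y := norm_add_le_sq1_mul_sq1 x y

lemma chord_nonneg (x y : OnePoint (E n)) : 0 ≤ chord x y := by
  cases x <;> cases y <;> simp [chord] <;>
    first
      | exact (sq1_pos _).le
      | exact div_nonneg dist_nonneg (mul_nonneg (sq1_pos _).le (sq1_pos _).le)
      | exact ⟨dist_nonneg, (mul_pos (sq1_pos _) (sq1_pos _)).le⟩
      | exact fun _ => dist_nonneg

lemma chord_coe_le_dist (x y : E n) : chord (x : OnePoint (E n)) y ≤ dist x y := by
  rw [chord_coe_coe]
  have h1 : 1 ≤ sq1 x * sq1 y :=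
    one_le_mul_of_one_le_of_one_le (one_le_sq1 x) (one_le_sq1 y)
  rw [div_le_iff₀ (mul_pos (sq1_pos x) (sq1_pos y))]
  nlinarith [dist_nonneg (x := x) (y := y)]

end CassinianAux
namespace CassinianAux

open EuclideanGeometry

variable {n : ℕ}

lemma sphereInv_infty (c : E n) (R : ℝ) : sphereInv c R ∞ = (c : OnePoint (E n)) := rfl

lemma sphereInv_center (c : E n) (R : ℝ) : sphereInv c R (c : OnePoint (E n)) = ∞ := by
  simp [sphereInv]

lemma sphereInv_coe {c x : E n} (R : ℝ) (hx : x ≠ c) :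
    sphereInv c R (x : OnePoint (E n)) = ((inversion c R x : E n) : OnePoint (E n)) := by
  simp only [sphereInv, hx, if_false]
  congr 1
  simp only [EuclideanGeometry.inversion, vsub_eq_sub, vadd_eq_add, div_pow, dist_eq_norm]
  abel

lemma sphereInv_involutive (c : E n) {R : ℝ} (hR : 0 < R) :
    Function.Involutive (sphereInv c R) := by
  intro z
  cases z with
  | infty => rw [sphereInv_infty, sphereInv_center]
  | coe x =>
    rcases eq_or_ne x c with rfl | hx
    · rw [sphereInv_center, sphereInv_infty]
    · rw [sphereInv_coe R hx]
      have h2 : inversion c R x ≠ c := by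
        rw [Ne, inversion_eq_center hR.ne']; exact hx
      rw [sphereInv_coe R h2, inversion_inversion c hR.ne' x]

/-- The finite reflection map. -/
noncomputable def reflPt (u : E n) (d : ℝ) (x : E n) : E n :=
  x - ((2 * (⟪x, u⟫ - d)) / ‖u‖ ^ 2) • u

lemma hypRefl_infty (u : E n) (d : ℝ) : hypRefl u d ∞ = (∞ : OnePoint (E n)) := rfl

lemma hypRefl_coe (u : E n) (d : ℝ) (x : E n) :
    hypRefl u d (x : OnePoint (E n)) = (reflPt u d x : OnePoint (E n)) := rfl

lemma inner_reflPt (u : E n) (d : ℝ) (hu : u ≠ 0) (x : E n) :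
    ⟪reflPt u d x, u⟫ = 2 * d - ⟪x, u⟫ := by
  have hnu : ‖u‖ ^ 2 ≠ 0 := pow_ne_zero 2 (norm_ne_zero_iff.2 hu)
  rw [reflPt, inner_sub_left, real_inner_smul_left, real_inner_self_eq_norm_sq]
  field_simp
  ring

lemma reflPt_involutive (u : E n) (d : ℝ) (hu : u ≠ 0) :
    Function.Involutive (reflPt u d) := by
  intro x
  have h := inner_reflPt u d hu x
  rw [reflPt, h]
  rw [show reflPt u d x = x - ((2 * (⟪x, u⟫ - d)) / ‖u‖ ^ 2) • u from rfl]
  rw [sub_sub, ← add_smul]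
  have h0 : 2 * (⟪x, u⟫ - d) / ‖u‖ ^ 2 + 2 * (2 * d - ⟪x, u⟫ - d) / ‖u‖ ^ 2 = 0 := by
    rw [← add_div]; ring_nf
  rw [h0, zero_smul, sub_zero]

lemma hypRefl_involutive (u : E n) (d : ℝ) (hu : u ≠ 0) :
    Function.Involutive (hypRefl u d) := by
  intro z
  cases z with
  | infty => rfl
  | coe x => rw [hypRefl_coe, hypRefl_coe, reflPt_involutive u d hu x]

lemma dist_reflPt (u : E n) (d : ℝ) (hu : u ≠ 0) (x y : E n) :
    dist (reflPt u d x) (reflPt u d y) = dist x y := by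
  have hnu : (0:ℝ) < ‖u‖ ^ 2 := by
    have := norm_pos_iff.2 hu; positivity
  rw [dist_eq_norm, dist_eq_norm]
  have hxy : reflPt u d x - reflPt u d y
      = (x - y) - ((2 * ⟪x - y, u⟫) / ‖u‖ ^ 2) • u := by
    rw [reflPt, reflPt, inner_sub_left]
    rw [show (2 * (⟪x,u⟫ - ⟪y,u⟫)) / ‖u‖ ^ 2
        = (2 * (⟪x,u⟫ - d)) / ‖u‖ ^ 2 - (2 * (⟪y,u⟫ - d)) / ‖u‖ ^ 2 by
      rw [div_sub_div_same]; ring_nf]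
    rw [sub_smul]
    abel
  rw [hxy]
  have hsq : ‖(x - y) - ((2 * ⟪x - y, u⟫) / ‖u‖ ^ 2) • u‖ ^ 2 = ‖x - y‖ ^ 2 := by
    have hu' : ‖u‖ ≠ 0 := norm_ne_zero_iff.2 hu
    rw [norm_sub_sq_real, real_inner_smul_right, norm_smul, mul_pow,
      Real.norm_eq_abs, sq_abs]
    field_simp
    ring
  have h1 : (0:ℝ) ≤ ‖(x - y) - ((2 * ⟪x - y, u⟫) / ‖u‖ ^ 2) • u‖ := norm_nonneg _
  have h2 : (0:ℝ) ≤ ‖x - y‖ := norm_nonneg _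
  nlinarith

lemma exists_inverse {F : OnePoint (E n) → OnePoint (E n)} (hF : IsMobius n F) :
    ∃ G, IsMobius n G ∧ (∀ z, G (F z) = z) ∧ (∀ z, F (G z) = z) := by
  induction hF with
  | inv c R hR =>
      exact ⟨sphereInv c R, IsMobius.inv c R hR,
        sphereInv_involutive c hR, sphereInv_involutive c hR⟩
  | refl u d hu =>
      exact ⟨hypRefl u d, IsMobius.refl u d hu,
        hypRefl_involutive u d hu, hypRefl_involutive u d hu⟩
  | comp f g hf hg ihf ihg =>
      obtain ⟨Gf, hGf, hGf1, hGf2⟩ := ihf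
      obtain ⟨Gg, hGg, hGg1, hGg2⟩ := ihg
      refine ⟨Gg ∘ Gf, IsMobius.comp _ _ hGg hGf, fun z => ?_, fun z => ?_⟩
      · simp only [Function.comp_apply, hGf1, hGg1]
      · simp only [Function.comp_apply, hGg2, hGf2]

lemma mobius_injective {F : OnePoint (E n) → OnePoint (E n)} (hF : IsMobius n F) :
    Function.Injective F := by
  obtain ⟨G, _, hG1, _⟩ := exists_inverse hF
  exact Function.LeftInverse.injective hG1

end CassinianAux
namespace CassinianAux

open EuclideanGeometry

variable {n : ℕ}

open Classical in
noncomputable def sigInv (c : E n) (R : ℝ) : OnePoint (E n) → ℝ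
  | OnePoint.infty => R / sq1 c
  | OnePoint.some x => if x = c then sq1 c / R
      else R * sq1 x / (dist x c * sq1 (inversion c R x))

@[simp] lemma sigInv_infty (c : E n) (R : ℝ) : sigInv c R ∞ = R / sq1 c := rfl

lemma sigInv_center (c : E n) (R : ℝ) : sigInv c R (c : OnePoint (E n)) = sq1 c / R := by
  simp [sigInv]

lemma sigInv_coe (c : E n) (R : ℝ) {x : E n} (hx : x ≠ c) :
    sigInv c R (x : OnePoint (E n)) = R * sq1 x / (dist x c * sq1 (inversion c R x)) := by
  simp [sigInv, hx]

noncomputable def sigRefl (u : E n) (d : ℝ) : OnePoint (E n) → ℝ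
  | OnePoint.infty => 1
  | OnePoint.some x => sq1 x / sq1 (reflPt u d x)

@[simp] lemma sigRefl_infty (u : E n) (d : ℝ) : sigRefl u d ∞ = 1 := rfl

@[simp] lemma sigRefl_coe (u : E n) (d : ℝ) (x : E n) :
    sigRefl u d (x : OnePoint (E n)) = sq1 x / sq1 (reflPt u d x) := rfl

lemma sigInv_pos (c : E n) {R : ℝ} (hR : 0 < R) (z : OnePoint (E n)) : 0 < sigInv c R z := by
  cases z with
  | infty => exact div_pos hR (sq1_pos c)
  | coe x =>
    rcases eq_or_ne x c with hxc | hx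
    · rw [hxc, sigInv_center]; exact div_pos (sq1_pos c) hR
    · rw [sigInv_coe c R hx]
      exact div_pos (mul_pos hR (sq1_pos x))
        (mul_pos (dist_pos.2 hx) (sq1_pos _))

lemma sigRefl_pos (u : E n) (d : ℝ) (z : OnePoint (E n)) : 0 < sigRefl u d z := by
  cases z with
  | infty => norm_num
  | coe x => exact div_pos (sq1_pos x) (sq1_pos _)

lemma chord_sphereInv (c : E n) {R : ℝ} (hR : 0 < R) (x y : OnePoint (E n)) :
    chord (sphereInv c R x) (sphereInv c R y)
      = sigInv c R x * sigInv c R y * chord x y := by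
  have hs : ∀ z : E n, sq1 z ≠ 0 := fun z => (sq1_pos z).ne'
  have hRne : R ≠ 0 := hR.ne'
  cases x with
  | infty =>
    cases y with
    | infty =>
      rw [sphereInv_infty, chord_coe_coe]
      simp [dist_self]
    | coe y =>
      rcases eq_or_ne y c with hyc | hy
      · rw [hyc, sphereInv_infty, sphereInv_center, chord_coe_infty, sigInv_infty,
          sigInv_center, chord_infty_coe]
        field_simp [hs c]
      · rw [sphereInv_infty, sphereInv_coe R hy, chord_coe_coe, sigInv_infty,
          sigInv_coe c R hy, chord_infty_coe, dist_center_inversion, dist_comm c y]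
        have hd : dist y c ≠ 0 := dist_ne_zero.2 hy
        field_simp [hs c, hs y, hs (inversion c R y)]
  | coe x =>
    rcases eq_or_ne x c with hxc | hx
    · cases y with
      | infty =>
        rw [hxc, sphereInv_infty, sphereInv_center, chord_infty_coe, sigInv_infty,
          sigInv_center, chord_coe_infty]
        field_simp [hs c]
      | coe y =>
        rcases eq_or_ne y c with hyc | hy
        · rw [hxc, hyc, sphereInv_center, chord_infty_infty, chord_coe_coe]
          simp [dist_self]
        · rw [hxc, sphereInv_center, sphereInv_coe R hy, chord_infty_coe, sigInv_center,
            sigInv_coe c R hy, chord_coe_coe]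
          have hd : dist y c ≠ 0 := dist_ne_zero.2 hy
          rw [dist_comm c y]
          field_simp [hs c, hs y, hs (inversion c R y)]
    · cases y with
      | infty =>
        rw [sphereInv_infty, sphereInv_coe R hx, chord_coe_coe, sigInv_infty,
          sigInv_coe c R hx, chord_coe_infty, dist_inversion_center]
        have hd : dist x c ≠ 0 := dist_ne_zero.2 hx
        field_simp [hs c, hs x, hs (inversion c R x)]
      | coe y =>
        rcases eq_or_ne y c with hyc | hy
        · rw [hyc, sphereInv_center, sphereInv_coe R hx, chord_coe_infty, sigInv_center,
            sigInv_coe c R hx, chord_coe_coe, dist_comm x c]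
          have hd : dist c x ≠ 0 := dist_ne_zero.2 (Ne.symm hx)
          field_simp [hs c, hs x, hs (inversion c R x)]
        · rw [sphereInv_coe R hx, sphereInv_coe R hy, chord_coe_coe, chord_coe_coe,
            sigInv_coe c R hx, sigInv_coe c R hy, dist_inversion_inversion hx hy R]
          have hdx : dist x c ≠ 0 := dist_ne_zero.2 hx
          have hdy : dist y c ≠ 0 := dist_ne_zero.2 hy
          field_simp [hs x, hs y, hs (inversion c R x), hs (inversion c R y)]

lemma chord_hypRefl {u : E n} (d : ℝ) (hu : u ≠ 0) (x y : OnePoint (E n)) :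
    chord (hypRefl u d x) (hypRefl u d y)
      = sigRefl u d x * sigRefl u d y * chord x y := by
  have hs : ∀ z : E n, sq1 z ≠ 0 := fun z => (sq1_pos z).ne'
  cases x with
  | infty =>
    cases y with
    | infty => simp [hypRefl_infty]
    | coe y =>
      rw [hypRefl_infty, hypRefl_coe, chord_infty_coe, sigRefl_infty, sigRefl_coe,
        chord_infty_coe]
      field_simp [hs y, hs (reflPt u d y)]
  | coe x =>
    cases y with
    | infty =>
      rw [hypRefl_infty, hypRefl_coe, chord_coe_infty, sigRefl_infty, sigRefl_coe,
        chord_coe_infty]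
      field_simp [hs x, hs (reflPt u d x)]
    | coe y =>
      rw [hypRefl_coe, hypRefl_coe, chord_coe_coe, chord_coe_coe, sigRefl_coe,
        sigRefl_coe, dist_reflPt u d hu]
      field_simp [hs x, hs y, hs (reflPt u d x), hs (reflPt u d y)]

lemma exists_sigma {F : OnePoint (E n) → OnePoint (E n)} (hF : IsMobius n F) :
    ∃ σ : OnePoint (E n) → ℝ, (∀ z, 0 < σ z) ∧
      ∀ x y, chord (F x) (F y) = σ x * σ y * chord x y := by
  induction hF with
  | inv c R hR => exact ⟨sigInv c R, sigInv_pos c hR, chord_sphereInv c hR⟩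
  | refl u d hu => exact ⟨sigRefl u d, sigRefl_pos u d, chord_hypRefl d hu⟩
  | comp f g hf hg ihf ihg =>
    obtain ⟨σf, hσf, hf'⟩ := ihf
    obtain ⟨σg, hσg, hg'⟩ := ihg
    refine ⟨fun z => σf (g z) * σg z, fun z => mul_pos (hσf _) (hσg _), fun x y => ?_⟩
    simp only [Function.comp_apply]
    rw [hf' (g x) (g y), hg' x y]
    ring

end CassinianAux
namespace CassinianAux

open EuclideanGeometry Metric Set

variable {n : ℕ}

lemma ball_image_mem {F : OnePoint (E n) → OnePoint (E n)}
    (hFball : F '' ((↑) '' ball (0 : E n) 1) = (↑) '' ball (0 : E n) 1)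
    {z : E n} (hz : ‖z‖ < 1) : ∃ w : E n, F ↑z = ↑w ∧ ‖w‖ < 1 := by
  have hzS : (↑z : OnePoint (E n)) ∈ ((↑) '' ball (0 : E n) 1 : Set (OnePoint (E n))) :=
    mem_image_of_mem _ (by simpa [mem_ball, dist_zero_right] using hz)
  have : F ↑z ∈ F '' ((↑) '' ball (0 : E n) 1) := mem_image_of_mem F hzS
  rw [hFball] at this
  obtain ⟨w, hw, hweq⟩ := this
  exact ⟨w, hweq.symm, by simpa [mem_ball, dist_zero_right] using hw⟩

lemma sqrt_two_pos : (0:ℝ) < Real.sqrt 2 := Real.sqrt_pos.2 (by norm_num)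

lemma sphere_to_sphere {F : OnePoint (E n) → OnePoint (E n)} (hF : IsMobius n F)
    (hFball : F '' ((↑) '' ball (0 : E n) 1) = (↑) '' ball (0 : E n) 1)
    {p : E n} (hp : ‖p‖ = 1) : ∃ q : E n, F ↑p = ↑q ∧ ‖q‖ = 1 := by
  obtain ⟨σ, hσpos, hσ⟩ := exists_sigma hF
  have hinj := mobius_injective hF
  set C : ℝ := Real.sqrt 2 * σ ↑p / σ ∞ with hC
  have hCpos : 0 < C := div_pos (mul_pos sqrt_two_pos (hσpos _)) (hσpos _)
  have key : ∀ δ : ℝ, 0 < δ → δ < 1 →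
      ∃ w : E n, ‖w‖ < 1 ∧ F (((1 - δ) • p : E n) : OnePoint (E n)) = ↑w ∧
        chord (↑w) (F ↑p) ≤ C * δ := by
    intro δ h0 h1
    set z : E n := (1 - δ) • p with hzdef
    have hz : ‖z‖ < 1 := by
      rw [hzdef, norm_smul, Real.norm_eq_abs, abs_of_pos (by linarith), hp]
      linarith
    obtain ⟨w, hw, hw1⟩ := ball_image_mem hFball hz
    refine ⟨w, hw1, hw, ?_⟩
    have h2 : chord (F ↑z) (F ↑p) = σ ↑z * σ ↑p * chord (z : OnePoint (E n)) (p : OnePoint (E n)) := hσ _ _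
    have e1 : σ ↑z * σ ∞ * (1 / sq1 z) ≤ 1 := by
      have h3 : chord (F ↑z) (F ∞) = σ ↑z * σ ∞ * chord (z : OnePoint (E n)) ∞ := hσ _ _
      rw [chord_coe_infty] at h3
      rw [← h3]
      exact chord_le_one _ _
    have hσz : σ ↑z ≤ Real.sqrt 2 / σ ∞ := by
      rw [mul_one_div] at e1
      have e2 : σ ↑z * σ ∞ ≤ sq1 z := (div_le_one (sq1_pos z)).1 e1
      rw [le_div_iff₀ (hσpos ∞)]
      exact e2.trans (sq1_le_sqrt2 hz.le)
    have hzp : chord (z : OnePoint (E n)) (p : OnePoint (E n)) ≤ δ := by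
      refine (chord_coe_le_dist z p).trans ?_
      rw [dist_eq_norm]
      have : z - p = (-δ) • p := by
        rw [hzdef]; module
      rw [this, norm_smul, Real.norm_eq_abs, abs_neg, abs_of_pos h0, hp, mul_one]
    rw [← hw, h2]
    calc σ ↑z * σ ↑p * chord (z : OnePoint (E n)) (p : OnePoint (E n)) ≤ (Real.sqrt 2 / σ ∞) * σ ↑p * δ := by
          apply mul_le_mul
          · exact mul_le_mul_of_nonneg_right hσz (hσpos _).le
          · exact hzp
          · exact chord_nonneg _ _
          · exact mul_nonneg (div_nonneg sqrt_two_pos.le (hσpos _).le) (hσpos _).le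
      _ = C * δ := by rw [hC]; ring
  -- F ↑p is finite
  have hfin : F ↑p ≠ ∞ := by
    intro hfp
    set δ : ℝ := min (1/2) (1 / (2 * C * Real.sqrt 2)) with hδ
    have hδ0 : 0 < δ := lt_min (by norm_num) (by positivity)
    have hδ1 : δ < 1 := lt_of_le_of_lt (min_le_left _ _) (by norm_num)
    obtain ⟨w, hw1, hw, hchord⟩ := key δ hδ0 hδ1
    rw [hfp, chord_coe_infty] at hchord
    have hb : 1 / Real.sqrt 2 ≤ 1 / sq1 w :=
      one_div_le_one_div_of_le (sq1_pos w) (sq1_le_sqrt2 hw1.le)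
    have hub : C * δ ≤ 1 / (2 * Real.sqrt 2) := by
      have : δ ≤ 1 / (2 * C * Real.sqrt 2) := min_le_right _ _
      calc C * δ ≤ C * (1 / (2 * C * Real.sqrt 2)) :=
            mul_le_mul_of_nonneg_left this hCpos.le
        _ = 1 / (2 * Real.sqrt 2) := by
            field_simp
    have : (1:ℝ) / Real.sqrt 2 ≤ 1 / (2 * Real.sqrt 2) := le_trans hb (hchord.trans hub)
    have h2 : 0 < Real.sqrt 2 := sqrt_two_pos
    rw [div_le_div_iff₀ (by positivity) (by positivity)] at this
    nlinarith
  obtain ⟨q, hq⟩ : ∃ q : E n, F ↑p = ↑q := by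
    cases h : F ↑p with
    | infty => exact absurd h hfin
    | coe q => exact ⟨q, rfl⟩
  refine ⟨q, hq, ?_⟩
  -- ‖q‖ ≤ 1
  have hle : ‖q‖ ≤ 1 := by
    by_contra hq1
    push_neg at hq1
    set C' : ℝ := Real.sqrt 2 * sq1 q * C with hC'
    have hC'pos : 0 < C' := mul_pos (mul_pos sqrt_two_pos (sq1_pos q)) hCpos
    set δ : ℝ := min (1/2) ((‖q‖ - 1) / (2 * C')) with hδ
    have hδ0 : 0 < δ := lt_min (by norm_num) (div_pos (by linarith) (by positivity))
    have hδ1 : δ < 1 := lt_of_le_of_lt (min_le_left _ _) (by norm_num)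
    obtain ⟨w, hw1, hw, hchord⟩ := key δ hδ0 hδ1
    rw [hq, chord_coe_coe] at hchord
    have hdist : dist w q ≤ C' * δ := by
      have h1 : dist w q / (Real.sqrt 2 * sq1 q) ≤ dist w q / (sq1 w * sq1 q) := by
        apply div_le_div_of_nonneg_left dist_nonneg
        · exact mul_pos (sq1_pos w) (sq1_pos q)
        · exact mul_le_mul_of_nonneg_right (sq1_le_sqrt2 hw1.le) (sq1_pos q).le
      have h2 : dist w q / (Real.sqrt 2 * sq1 q) ≤ C * δ := h1.trans hchord
      rw [div_le_iff₀ (mul_pos sqrt_two_pos (sq1_pos q))] at h2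
      calc dist w q ≤ C * δ * (Real.sqrt 2 * sq1 q) := h2
        _ = C' * δ := by rw [hC']; ring
    have hd2 : C' * δ ≤ (‖q‖ - 1) / 2 := by
      have : δ ≤ (‖q‖ - 1) / (2 * C') := min_le_right _ _
      calc C' * δ ≤ C' * ((‖q‖ - 1) / (2 * C')) := mul_le_mul_of_nonneg_left this hC'pos.le
        _ = (‖q‖ - 1) / 2 := by field_simp
    have hq2 : ‖q‖ - ‖w‖ ≤ dist w q := by
      rw [dist_comm, dist_eq_norm]
      calc ‖q‖ - ‖w‖ ≤ ‖q - w‖ := norm_sub_norm_le q w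
        _ = ‖q - w‖ := rfl
    linarith
  -- ‖q‖ ≥ 1
  rcases lt_or_eq_of_le hle with hlt | heq
  · exfalso
    have hqS : (↑q : OnePoint (E n)) ∈ ((↑) '' ball (0 : E n) 1 : Set (OnePoint (E n))) :=
      mem_image_of_mem _ (by simpa [mem_ball, dist_zero_right] using hlt)
    rw [← hFball] at hqS
    obtain ⟨s, hsS, hsq⟩ := hqS
    have : s = ↑p := hinj (by rw [hsq, hq])
    rw [this] at hsS
    obtain ⟨z, hz, hzp⟩ := hsS
    have hzp' : z = p := OnePoint.coe_eq_coe.1 hzp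
    rw [hzp', mem_ball, dist_zero_right, hp] at hz
    exact lt_irrefl 1 hz
  · exact heq

end CassinianAux
namespace CassinianAux

open EuclideanGeometry Metric Set

variable {n : ℕ}

lemma exists_unit (hn : 2 ≤ n) : ∃ e : E n, ‖e‖ = 1 :=
  ⟨EuclideanSpace.single ⟨0, by omega⟩ (1:ℝ), by simp⟩

lemma ptolemy_ball (a u v : E n) (ha : ‖a‖ < 1) (hu : ‖u‖ = 1) (hv : ‖v‖ = 1) :
    (1 - ‖a‖ ^ 2) * dist u v ≤ 2 * (dist a u * dist a v) := by
  rcases eq_or_ne a 0 with rfl | ha0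
  · simp only [norm_zero, dist_zero_left]
    rw [hu, hv]
    calc (1 - (0:ℝ) ^ 2) * dist u v = dist u v := by ring
      _ ≤ dist u 0 + dist 0 v := dist_triangle u 0 v
      _ = 2 * (1 * 1) := by
          rw [dist_zero_right, dist_zero_left, hu, hv]; norm_num
  · set t : ℝ := ‖a‖ with htdef
    have ht0 : 0 < t := norm_pos_iff.2 ha0
    set c : E n := (t ^ 2)⁻¹ • a with hcdef
    have key : ∀ p : E n, ‖p‖ = 1 → dist p c = dist p a / t := by
      intro p hp
      have hsq : dist p c ^ 2 = (dist p a / t) ^ 2 := by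
        rw [dist_eq_norm, dist_eq_norm, div_pow, norm_sub_sq_real, norm_sub_sq_real]
        rw [hcdef, real_inner_smul_right, norm_smul, Real.norm_eq_abs, abs_inv,
          abs_of_pos (by positivity : (0:ℝ) < t ^ 2)]
        rw [hp, ← htdef]
        field_simp
        ring
      calc dist p c = Real.sqrt (dist p c ^ 2) := (Real.sqrt_sq dist_nonneg).symm
        _ = Real.sqrt ((dist p a / t) ^ 2) := by rw [hsq]
        _ = dist p a / t := Real.sqrt_sq (by positivity)
    have hac : dist a c = (1 - t ^ 2) / t := by
      rw [dist_eq_norm, hcdef]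
      have : a - (t ^ 2)⁻¹ • a = (1 - (t ^ 2)⁻¹) • a := by module
      rw [this, norm_smul, Real.norm_eq_abs, ← htdef]
      have h1 : (1 : ℝ) - (t ^ 2)⁻¹ ≤ 0 := by
        have : (1:ℝ) ≤ (t ^ 2)⁻¹ := by
          rw [le_inv_comm₀ one_pos (by positivity)]
          · nlinarith
        linarith
      rw [abs_of_nonpos h1]
      field_simp
      ring
    have hP := mul_dist_le_mul_dist_add_mul_dist u a v c
    rw [hac, key v hv, key u hu] at hP
    rw [dist_comm u a, dist_comm v a] at hP
    have h2 := mul_le_mul_of_nonneg_right hP ht0.le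
    have h3 : dist u v * ((1 - t ^ 2) / t) * t = (1 - t ^ 2) * dist u v := by
      field_simp
    have h4 : (dist a u * (dist a v / t) + dist a v * (dist a u / t)) * t
        = 2 * (dist a u * dist a v) := by
      field_simp; ring
    rw [h3, h4] at h2
    exact h2

lemma frontier_punctured_ball (hn : 2 ≤ n) {z : E n} (hz : ‖z‖ < 1) :
    frontier (ball (0 : E n) 1 \ {z}) = sphere (0 : E n) 1 ∪ {z} := by
  obtain ⟨e, he⟩ := exists_unit (n := n) hn
  have hD : IsOpen (ball (0 : E n) 1 \ {z}) := isOpen_ball.sdiff isClosed_singleton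
  have hsub : ball (0 : E n) 1 ⊆ closure (ball (0 : E n) 1 \ {z}) := by
    intro w hw
    rcases eq_or_ne w z with rfl | hwz
    · rw [Metric.mem_closure_iff]
      intro ε hε
      have hw1 : ‖w‖ < 1 := by rwa [mem_ball, dist_zero_right] at hw
      set δ : ℝ := min (ε / 2) ((1 - ‖w‖) / 2) with hδdef
      have hδ0 : 0 < δ := lt_min (by linarith) (by linarith)
      refine ⟨w + δ • e, ⟨?_, ?_⟩, ?_⟩
      · rw [mem_ball, dist_zero_right]
        calc ‖w + δ • e‖ ≤ ‖w‖ + ‖δ • e‖ := norm_add_le _ _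
          _ = ‖w‖ + δ := by
              rw [norm_smul, Real.norm_eq_abs, abs_of_pos hδ0, he, mul_one]
          _ ≤ ‖w‖ + (1 - ‖w‖) / 2 := by
              have := min_le_right (ε / 2) ((1 - ‖w‖) / 2); linarith
          _ < 1 := by linarith
      · simp only [mem_singleton_iff]
        intro hcon
        have : δ • e = 0 := by
          have := sub_eq_zero.2 hcon
          calc δ • e = w + δ • e - w := by abel
            _ = 0 := by rw [hcon]; abel
        rw [smul_eq_zero] at this
        rcases this with h | h
        · exact hδ0.ne' h
        · rw [h, norm_zero] at he; norm_num at he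
      · rw [dist_eq_norm]
        have : w - (w + δ • e) = -(δ • e) := by abel
        rw [this, norm_neg, norm_smul, Real.norm_eq_abs, abs_of_pos hδ0, he, mul_one]
        have := min_le_left (ε / 2) ((1 - ‖w‖) / 2); linarith
    · exact subset_closure ⟨hw, hwz⟩
  have hcl : closure (ball (0 : E n) 1 \ {z}) = closedBall (0 : E n) 1 := by
    apply subset_antisymm
    · calc closure (ball (0 : E n) 1 \ {z}) ⊆ closure (ball (0 : E n) 1) :=
            closure_mono diff_subset
        _ = closedBall (0 : E n) 1 := closure_ball _ one_ne_zero
    · calc closedBall (0 : E n) 1 = closure (ball (0 : E n) 1) :=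
            (closure_ball _ one_ne_zero).symm
        _ ⊆ closure (closure (ball (0 : E n) 1 \ {z})) := closure_mono hsub
        _ = closure (ball (0 : E n) 1 \ {z}) := closure_closure
  rw [frontier, hcl, hD.interior_eq]
  ext w
  simp only [mem_diff, mem_closedBall, mem_ball, dist_zero_right, mem_union,
    mem_sphere_iff_norm, sub_zero, mem_singleton_iff, not_and, not_not]
  constructor
  · rintro ⟨h1, h2⟩
    rcases lt_or_eq_of_le h1 with hlt | heq
    · exact Or.inr (h2 hlt)
    · exact Or.inl heq
  · rintro (h | rfl)
    · exact ⟨h.le, fun hlt => absurd hlt (by rw [h]; exact lt_irrefl 1)⟩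
    · exact ⟨hz.le, fun _ => rfl⟩

lemma dist_image {F : OnePoint (E n) → OnePoint (E n)} {σ : OnePoint (E n) → ℝ}
    (hσ : ∀ x y, chord (F x) (F y) = σ x * σ y * chord x y)
    {u v u' v' : E n} (hu : F ↑u = ↑u') (hv : F ↑v = ↑v') :
    dist u' v' = (σ ↑u * sq1 u' / sq1 u) * (σ ↑v * sq1 v' / sq1 v) * dist u v := by
  have h := hσ ↑u ↑v
  rw [hu, hv, chord_coe_coe, chord_coe_coe] at h
  have h1 := (sq1_pos u).ne'
  have h2 := (sq1_pos v).ne'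
  have h3 := (sq1_pos u').ne'
  have h4 := (sq1_pos v').ne'
  field_simp at h ⊢
  linear_combination h

end CassinianAux
namespace CassinianAux

variable {n : ℕ}

lemma iSup_prop_le {P : Prop} {c B : ℝ} (hc : P → c ≤ B) (hB : 0 ≤ B) :
    (⨆ (_ : P), c) ≤ B := by
  by_cases hp : P
  · rw [ciSup_pos hp]; exact hc hp
  · haveI : IsEmpty P := ⟨fun h => hp h⟩
    rw [Real.iSup_of_isEmpty]; exact hB

lemma iSup_prop_nonneg {P : Prop} {c : ℝ} (hc : 0 ≤ c) : 0 ≤ (⨆ (_ : P), c) := by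
  by_cases hp : P
  · rw [ciSup_pos hp]; exact hc
  · haveI : IsEmpty P := ⟨fun h => hp h⟩
    rw [Real.iSup_of_isEmpty]

end CassinianAux

open CassinianAux EuclideanGeometry

set_option maxHeartbeats 1000000

/-- **Theorem (distortion of the Cassinian metric of a punctured ball under Möbius maps).**
Let `a ∈ 𝔹ⁿ` and let `f : 𝔹ⁿ∖{0} → 𝔹ⁿ∖{a}` be the restriction of a Möbius transformation
`F` of `ℝⁿ ∪ {∞}` mapping the unit ball onto itself, with `f(0) = a` and
`f(𝔹ⁿ∖{0}) = 𝔹ⁿ∖{a}`.  Then for all `x, y ∈ 𝔹ⁿ∖{0}`,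
`((1-|a|)/(1+|a|)) c_{𝔹ⁿ∖{0}}(x,y) ≤ c_{𝔹ⁿ∖{a}}(f x, f y) ≤ ((1+|a|)/(1-|a|)) c_{𝔹ⁿ∖{0}}(x,y)`. -/
theorem cassinian_mobius_punctured_ball (n : ℕ) (hn : 2 ≤ n)
    (a : E n) (ha : a ∈ ball (0 : E n) 1)
    (F : OnePoint (E n) → OnePoint (E n)) (hF : IsMobius n F)
    (hFball : F '' ((↑) '' ball (0 : E n) 1) = (↑) '' ball (0 : E n) 1)
    (hF0 : F ((0 : E n) : OnePoint (E n)) = (a : OnePoint (E n)))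
    (f : E n → E n)
    (hf : ∀ z ∈ ball (0 : E n) 1 \ {0}, F (z : OnePoint (E n)) = (f z : OnePoint (E n)))
    (hfim : f '' (ball (0 : E n) 1 \ {0}) = ball (0 : E n) 1 \ {a})
    (x y : E n) (hx : x ∈ ball (0 : E n) 1 \ {0}) (hy : y ∈ ball (0 : E n) 1 \ {0}) :
    (1 - ‖a‖) / (1 + ‖a‖) * cassinian (ball (0 : E n) 1 \ {0}) x y
        ≤ cassinian (ball (0 : E n) 1 \ {a}) (f x) (f y) ∧
      cassinian (ball (0 : E n) 1 \ {a}) (f x) (f y)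
        ≤ (1 + ‖a‖) / (1 - ‖a‖) * cassinian (ball (0 : E n) 1 \ {0}) x y := by
  classical
  obtain ⟨G, hG, hGF, hFG⟩ := exists_inverse hF
  obtain ⟨σ, hσpos, hσ⟩ := exists_sigma hF
  have hinj := mobius_injective hF
  set D : Set (E n) := ball (0 : E n) 1 \ {0} with hD
  set D' : Set (E n) := ball (0 : E n) 1 \ {a} with hD'
  have ht : ‖a‖ < 1 := by rwa [mem_ball, dist_zero_right] at ha
  have ht0 : (0:ℝ) ≤ ‖a‖ := norm_nonneg a
  have hfD : frontier D = sphere (0 : E n) 1 ∪ {0} :=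
    frontier_punctured_ball hn (by simp)
  have hfD' : frontier D' = sphere (0 : E n) 1 ∪ {a} :=
    frontier_punctured_ball hn ht
  have hGball : G '' ((↑) '' ball (0 : E n) 1) = (↑) '' ball (0 : E n) 1 := by
    conv_lhs => rw [← hFball]
    rw [← Set.image_comp]
    have hGFid : G ∘ F = id := funext hGF
    rw [hGFid, Set.image_id]
  set ρ : E n → E n → ℝ := fun u u' => σ ↑u * sq1 u' / sq1 u with hρdef
  have hρpos : ∀ u u', 0 < ρ u u' := fun u u' =>
    div_pos (mul_pos (hσpos _) (sq1_pos _)) (sq1_pos _)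
  have hdist : ∀ (u v u' v' : E n), F ↑u = ↑u' → F ↑v = ↑v' →
      dist u' v' = ρ u u' * ρ v v' * dist u v := fun u v u' v' h1 h2 =>
    dist_image hσ h1 h2
  have hrel0 : ∀ p q : E n, ‖p‖ = 1 → F ↑p = ↑q → ρ 0 a * ρ p q = dist a q := by
    intro p q hp hq
    have h := hdist 0 p a q hF0 hq
    rw [dist_zero_left, hp, mul_one] at h
    exact h.symm
  have hFsph : ∀ p : E n, ‖p‖ = 1 → ∃ q : E n, F ↑p = ↑q ∧ ‖q‖ = 1 := fun p hp =>
    sphere_to_sphere hF hFball hp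
  have hGsph : ∀ q : E n, ‖q‖ = 1 → ∃ p : E n, ‖p‖ = 1 ∧ F ↑p = ↑q := by
    intro q hq
    obtain ⟨p, hGq, hpn⟩ := sphere_to_sphere hG hGball hq
    exact ⟨p, hpn, by rw [← hGq, hFG]⟩
  obtain ⟨e, he⟩ := exists_unit (n := n) hn
  -- ρ₀² = 1 - ‖a‖²
  have hρ0 : ρ 0 a ^ 2 = 1 - ‖a‖ ^ 2 := by
    have hup : ρ 0 a ^ 2 ≤ 1 - ‖a‖ ^ 2 := by
      obtain ⟨u, hu1, hau, hau'⟩ : ∃ u : E n, ‖u‖ = 1 ∧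
          dist a u = 1 - ‖a‖ ∧ dist a (-u) = 1 + ‖a‖ := by
        rcases eq_or_ne a 0 with h0 | h0
        · refine ⟨e, he, ?_, ?_⟩ <;>
            rw [h0] <;> simp [dist_zero_left, he, norm_neg]
        · have hna : (0:ℝ) < ‖a‖ := norm_pos_iff.2 h0
          refine ⟨‖a‖⁻¹ • a, ?_, ?_, ?_⟩
          · rw [norm_smul, Real.norm_eq_abs, abs_inv, abs_of_pos hna,
              inv_mul_cancel₀ hna.ne']
          · rw [dist_eq_norm]
            have hrw : a - ‖a‖⁻¹ • a = (1 - ‖a‖⁻¹) • a := by module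
            rw [hrw, norm_smul, Real.norm_eq_abs]
            have h1 : (1:ℝ) - ‖a‖⁻¹ ≤ 0 := by
              have : (1:ℝ) ≤ ‖a‖⁻¹ := by rw [le_inv_comm₀ one_pos hna]; nlinarith
              linarith
            rw [abs_of_nonpos h1]
            field_simp
            ring
          · rw [dist_eq_norm]
            have hrw : a - -(‖a‖⁻¹ • a) = (1 + ‖a‖⁻¹) • a := by module
            rw [hrw, norm_smul, Real.norm_eq_abs]
            have h1 : (0:ℝ) < 1 + ‖a‖⁻¹ := by positivity
            rw [abs_of_pos h1]
            field_simp
            ring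
      obtain ⟨p1, hp1n, hp1⟩ := hGsph u hu1
      obtain ⟨p2, hp2n, hp2⟩ := hGsph (-u) (by rw [norm_neg]; exact hu1)
      have r1 : ρ 0 a * ρ p1 u = 1 - ‖a‖ := by rw [hrel0 p1 u hp1n hp1, hau]
      have r2 : ρ 0 a * ρ p2 (-u) = 1 + ‖a‖ := by rw [hrel0 p2 (-u) hp2n hp2, hau']
      have r3 : dist u (-u) = ρ p1 u * ρ p2 (-u) * dist p1 p2 := hdist p1 p2 u (-u) hp1 hp2
      have hdu : dist u (-u) = 2 := by
        rw [dist_eq_norm]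
        have hrw : u - -u = (2:ℝ) • u := by module
        rw [hrw, norm_smul, Real.norm_eq_abs, hu1]
        norm_num
      have hd12 : dist p1 p2 ≤ 2 := by
        calc dist p1 p2 ≤ dist p1 0 + dist 0 p2 := dist_triangle _ _ _
          _ = 2 := by rw [dist_zero_right, dist_zero_left, hp1n, hp2n]; norm_num
      have hge1 : 1 ≤ ρ p1 u * ρ p2 (-u) := by
        rw [hdu] at r3
        nlinarith [mul_pos (hρpos p1 u) (hρpos p2 (-u)), dist_nonneg (x := p1) (y := p2)]
      nlinarith [sq_nonneg (ρ 0 a), hρpos p1 u, hρpos p2 (-u)]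
    have hlow : 1 - ‖a‖ ^ 2 ≤ ρ 0 a ^ 2 := by
      obtain ⟨q1, hq1, hq1n⟩ := hFsph e he
      obtain ⟨q2, hq2, hq2n⟩ := hFsph (-e) (by rw [norm_neg]; exact he)
      have s1 : ρ 0 a * ρ e q1 = dist a q1 := hrel0 e q1 he hq1
      have s2 : ρ 0 a * ρ (-e) q2 = dist a q2 :=
        hrel0 (-e) q2 (by rw [norm_neg]; exact he) hq2
      have s3 : dist q1 q2 = ρ e q1 * ρ (-e) q2 * dist e (-e) := hdist e (-e) q1 q2 hq1 hq2
      have hde : dist e (-e) = 2 := by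
        rw [dist_eq_norm]
        have hrw : e - -e = (2:ℝ) • e := by module
        rw [hrw, norm_smul, Real.norm_eq_abs, he]
        norm_num
      rw [hde] at s3
      have hP := ptolemy_ball a q1 q2 ht hq1n hq2n
      rw [s3, ← s1, ← s2] at hP
      nlinarith [mul_pos (hρpos e q1) (hρpos (-e) q2), hρpos e q1, hρpos (-e) q2]
    linarith
  -- boundary correspondence with distortion bounds
  set L : ℝ := (1 - ‖a‖) / (1 + ‖a‖) with hLdef
  set U : ℝ := (1 + ‖a‖) / (1 - ‖a‖) with hUdef
  have hL0 : 0 < L := div_pos (by linarith) (by linarith)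
  have hU0 : 0 < U := div_pos (by linarith) (by linarith)
  have hLU : L * U = 1 := by
    have h1 : (0:ℝ) < (1 + ‖a‖) * (1 - ‖a‖) := by nlinarith
    rw [hLdef, hUdef, div_mul_div_comm,
      show (1 - ‖a‖) * (1 + ‖a‖) = (1 + ‖a‖) * (1 - ‖a‖) by ring]
    exact div_self h1.ne'
  have hbound : ∀ p ∈ frontier D, ∃ q : E n,
      F ↑p = ↑q ∧ q ∈ frontier D' ∧ L ≤ ρ p q ^ 2 ∧ ρ p q ^ 2 ≤ U := by
    intro p hp
    rw [hfD] at hp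
    rcases hp with hp | hp
    · have hpn : ‖p‖ = 1 := mem_sphere_zero_iff_norm.1 hp
      obtain ⟨q, hq, hqn⟩ := hFsph p hpn
      have hr : ρ 0 a * ρ p q = dist a q := hrel0 p q hpn hq
      have hdaq1 : dist a q ≤ 1 + ‖a‖ := by
        calc dist a q ≤ dist a 0 + dist 0 q := dist_triangle _ _ _
          _ = ‖a‖ + 1 := by rw [dist_zero_right, dist_zero_left, hqn]
          _ = 1 + ‖a‖ := by ring
      have hdaq2 : 1 - ‖a‖ ≤ dist a q := by
        have : dist 0 q ≤ dist 0 a + dist a q := dist_triangle _ _ _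
        simp only [dist_zero_left] at this
        rw [hqn] at this
        linarith
      have hq2 : ρ p q ^ 2 * (1 - ‖a‖ ^ 2) = dist a q ^ 2 := by
        calc ρ p q ^ 2 * (1 - ‖a‖ ^ 2) = ρ p q ^ 2 * ρ 0 a ^ 2 := by rw [hρ0]
          _ = (ρ 0 a * ρ p q) ^ 2 := by ring
          _ = dist a q ^ 2 := by rw [hr]
      refine ⟨q, hq, by rw [hfD']; exact Or.inl (mem_sphere_zero_iff_norm.2 hqn), ?_, ?_⟩
      · rw [hLdef, div_le_iff₀ (by linarith : (0:ℝ) < 1 + ‖a‖)]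
        nlinarith [dist_nonneg (x := a) (y := q)]
      · rw [hUdef, le_div_iff₀ (by linarith : (0:ℝ) < 1 - ‖a‖)]
        nlinarith [dist_nonneg (x := a) (y := q)]
    · rw [Set.mem_singleton_iff] at hp
      subst hp
      refine ⟨a, hF0, by rw [hfD']; exact Or.inr rfl, ?_, ?_⟩
      · rw [hρ0, hLdef, div_le_iff₀ (by linarith : (0:ℝ) < 1 + ‖a‖)]
        nlinarith
      · rw [hρ0, hUdef, le_div_iff₀ (by linarith : (0:ℝ) < 1 - ‖a‖)]
        nlinarith
  have hsurj : ∀ q ∈ frontier D', ∃ p, p ∈ frontier D ∧ F ↑p = ↑q := by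
    intro q hq
    rw [hfD'] at hq
    rcases hq with hq | hq
    · obtain ⟨p, hpn, hpq⟩ := hGsph q (mem_sphere_zero_iff_norm.1 hq)
      exact ⟨p, by rw [hfD]; exact Or.inl (mem_sphere_zero_iff_norm.2 hpn), hpq⟩
    · rw [Set.mem_singleton_iff] at hq
      subst hq
      exact ⟨0, by rw [hfD]; exact Or.inr rfl, hF0⟩
  -- images of x and y
  have hFx : F ↑x = ↑(f x) := hf x hx
  have hFy : F ↑y = ↑(f y) := hf y hy
  have hfx' : f x ∈ D' := by rw [← hfim]; exact Set.mem_image_of_mem f hx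
  have hfy' : f y ∈ D' := by rw [← hfim]; exact Set.mem_image_of_mem f hy
  have hx1 : ‖x‖ < 1 := by
    have := hx.1; rwa [mem_ball, dist_zero_right] at this
  have hy1 : ‖y‖ < 1 := by
    have := hy.1; rwa [mem_ball, dist_zero_right] at this
  have hx0 : x ≠ 0 := by simpa using hx.2
  have hy0 : y ≠ 0 := by simpa using hy.2
  have hfx1 : ‖f x‖ < 1 := by
    have := hfx'.1; rwa [mem_ball, dist_zero_right] at this
  have hfy1 : ‖f y‖ < 1 := by
    have := hfy'.1; rwa [mem_ball, dist_zero_right] at this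
  have hfxa : f x ≠ a := by simpa using hfx'.2
  have hfya : f y ≠ a := by simpa using hfy'.2
  have hxne : ∀ p ∈ frontier D, x ≠ p := by
    intro p hp heq
    rw [hfD] at hp
    rcases hp with hp | hp
    · rw [mem_sphere_zero_iff_norm, ← heq] at hp
      linarith
    · rw [Set.mem_singleton_iff] at hp
      exact hx0 (heq.trans hp)
  have hyne : ∀ p ∈ frontier D, y ≠ p := by
    intro p hp heq
    rw [hfD] at hp
    rcases hp with hp | hp
    · rw [mem_sphere_zero_iff_norm, ← heq] at hp
      linarith
    · rw [Set.mem_singleton_iff] at hp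
      exact hy0 (heq.trans hp)
  have hfxne : ∀ q ∈ frontier D', f x ≠ q := by
    intro q hq heq
    rw [hfD'] at hq
    rcases hq with hq | hq
    · rw [mem_sphere_zero_iff_norm, ← heq] at hq
      linarith
    · rw [Set.mem_singleton_iff] at hq
      exact hfxa (heq.trans hq)
  have hfyne : ∀ q ∈ frontier D', f y ≠ q := by
    intro q hq heq
    rw [hfD'] at hq
    rcases hq with hq | hq
    · rw [mem_sphere_zero_iff_norm, ← heq] at hq
      linarith
    · rw [Set.mem_singleton_iff] at hq
      exact hfya (heq.trans hq)
  -- the Cassinian integrands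
  set r : E n → ℝ := fun p => dist x y / (dist x p * dist p y) with hrdef
  set r' : E n → ℝ := fun q => dist (f x) (f y) / (dist (f x) q * dist q (f y)) with hr'def
  have hrnn : ∀ p, 0 ≤ r p := fun p =>
    div_nonneg dist_nonneg (mul_nonneg dist_nonneg dist_nonneg)
  have hr'nn : ∀ q, 0 ≤ r' q := fun q =>
    div_nonneg dist_nonneg (mul_nonneg dist_nonneg dist_nonneg)
  have hcassD : cassinian D x y = ⨆ p, ⨆ (_ : p ∈ frontier D), r p := rfl
  have hcassD' : cassinian D' (f x) (f y) = ⨆ q, ⨆ (_ : q ∈ frontier D'), r' q := rfl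
  -- the key identity
  have hident : ∀ p q : E n, p ∈ frontier D → F ↑p = ↑q → r' q * ρ p q ^ 2 = r p := by
    intro p q hp hq
    have e1 : dist (f x) (f y) = ρ x (f x) * ρ y (f y) * dist x y := hdist x y _ _ hFx hFy
    have e2 : dist (f x) q = ρ x (f x) * ρ p q * dist x p := hdist x p _ _ hFx hq
    have e3 : dist q (f y) = ρ p q * ρ y (f y) * dist p y := hdist p y _ _ hq hFy
    have hxp : dist x p ≠ 0 := dist_ne_zero.2 (hxne p hp)
    have hpy : dist p y ≠ 0 := dist_ne_zero.2 (Ne.symm (hyne p hp))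
    have n1 : ρ x (f x) ≠ 0 := (hρpos _ _).ne'
    have n2 : ρ y (f y) ≠ 0 := (hρpos _ _).ne'
    have n3 : ρ p q ≠ 0 := (hρpos _ _).ne'
    rw [hr'def, hrdef]
    simp only
    rw [e1, e2, e3]
    field_simp
  -- boundedness of the two families
  set mx : ℝ := min ‖x‖ (1 - ‖x‖) with hmxdef
  set my : ℝ := min ‖y‖ (1 - ‖y‖) with hmydef
  have hmx : 0 < mx := lt_min (norm_pos_iff.2 hx0) (by linarith)
  have hmy : 0 < my := lt_min (norm_pos_iff.2 hy0) (by linarith)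
  have hdxp : ∀ p ∈ frontier D, mx ≤ dist x p := by
    intro p hp
    rw [hfD] at hp
    rcases hp with hp | hp
    · rw [mem_sphere_zero_iff_norm] at hp
      have h1 : dist 0 p ≤ dist 0 x + dist x p := dist_triangle _ _ _
      simp only [dist_zero_left] at h1
      rw [hp] at h1
      calc mx ≤ 1 - ‖x‖ := min_le_right _ _
        _ ≤ dist x p := by linarith
    · rw [Set.mem_singleton_iff] at hp
      subst hp
      rw [dist_zero_right]
      exact min_le_left _ _
  have hdpy : ∀ p ∈ frontier D, my ≤ dist p y := by
    intro p hp
    rw [hfD] at hp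
    rcases hp with hp | hp
    · rw [mem_sphere_zero_iff_norm] at hp
      have h1 : dist 0 p ≤ dist 0 y + dist y p := dist_triangle _ _ _
      simp only [dist_zero_left] at h1
      rw [hp] at h1
      rw [dist_comm p y]
      calc my ≤ 1 - ‖y‖ := min_le_right _ _
        _ ≤ dist y p := by linarith
    · rw [Set.mem_singleton_iff] at hp
      subst hp
      rw [dist_comm, dist_zero_right]
      exact min_le_left _ _
  set mx' : ℝ := min (dist (f x) a) (1 - ‖f x‖) with hmx'def
  set my' : ℝ := min (dist (f y) a) (1 - ‖f y‖) with hmy'def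
  have hmx' : 0 < mx' := lt_min (dist_pos.2 hfxa) (by linarith)
  have hmy' : 0 < my' := lt_min (dist_pos.2 hfya) (by linarith)
  have hdxq : ∀ q ∈ frontier D', mx' ≤ dist (f x) q := by
    intro q hq
    rw [hfD'] at hq
    rcases hq with hq | hq
    · rw [mem_sphere_zero_iff_norm] at hq
      have h1 : dist 0 q ≤ dist 0 (f x) + dist (f x) q := dist_triangle _ _ _
      simp only [dist_zero_left] at h1
      rw [hq] at h1
      calc mx' ≤ 1 - ‖f x‖ := min_le_right _ _
        _ ≤ dist (f x) q := by linarith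
    · rw [Set.mem_singleton_iff] at hq
      subst hq
      exact min_le_left _ _
  have hdqy : ∀ q ∈ frontier D', my' ≤ dist q (f y) := by
    intro q hq
    rw [hfD'] at hq
    rcases hq with hq | hq
    · rw [mem_sphere_zero_iff_norm] at hq
      have h1 : dist 0 q ≤ dist 0 (f y) + dist (f y) q := dist_triangle _ _ _
      simp only [dist_zero_left] at h1
      rw [hq] at h1
      rw [dist_comm q (f y)]
      calc my' ≤ 1 - ‖f y‖ := min_le_right _ _
        _ ≤ dist (f y) q := by linarith
    · rw [Set.mem_singleton_iff] at hq
      subst hq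
      rw [dist_comm]
      exact min_le_left _ _
  have hrB : ∀ p ∈ frontier D, r p ≤ dist x y / (mx * my) := by
    intro p hp
    rw [hrdef]
    simp only
    exact div_le_div_of_nonneg_left dist_nonneg (mul_pos hmx hmy)
      (mul_le_mul (hdxp p hp) (hdpy p hp) hmy.le dist_nonneg)
  have hr'B : ∀ q ∈ frontier D', r' q ≤ dist (f x) (f y) / (mx' * my') := by
    intro q hq
    rw [hr'def]
    simp only
    exact div_le_div_of_nonneg_left dist_nonneg (mul_pos hmx' hmy')
      (mul_le_mul (hdxq q hq) (hdqy q hq) hmy'.le dist_nonneg)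
  have hBnn : 0 ≤ dist x y / (mx * my) := div_nonneg dist_nonneg (mul_pos hmx hmy).le
  have hB'nn : 0 ≤ dist (f x) (f y) / (mx' * my') :=
    div_nonneg dist_nonneg (mul_pos hmx' hmy').le
  have hbddD : BddAbove (Set.range fun p => ⨆ (_ : p ∈ frontier D), r p) := by
    refine ⟨dist x y / (mx * my), ?_⟩
    rintro _ ⟨p, rfl⟩
    exact iSup_prop_le (fun hp => hrB p hp) hBnn
  have hbddD' : BddAbove (Set.range fun q => ⨆ (_ : q ∈ frontier D'), r' q) := by
    refine ⟨dist (f x) (f y) / (mx' * my'), ?_⟩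
    rintro _ ⟨q, rfl⟩
    exact iSup_prop_le (fun hq => hr'B q hq) hB'nn
  have hcDnn : 0 ≤ cassinian D x y := by
    rw [hcassD]
    exact le_trans (iSup_prop_nonneg (hrnn 0)) (le_ciSup hbddD 0)
  have hcD'nn : 0 ≤ cassinian D' (f x) (f y) := by
    rw [hcassD']
    exact le_trans (iSup_prop_nonneg (hr'nn a)) (le_ciSup hbddD' a)
  have hrle : ∀ p ∈ frontier D, r p ≤ cassinian D x y := by
    intro p hp
    rw [hcassD]
    calc r p = ⨆ (_ : p ∈ frontier D), r p := (ciSup_pos (f := fun _ => r p) hp).symm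
      _ ≤ _ := le_ciSup hbddD p
  have hr'le : ∀ q ∈ frontier D', r' q ≤ cassinian D' (f x) (f y) := by
    intro q hq
    rw [hcassD']
    calc r' q = ⨆ (_ : q ∈ frontier D'), r' q := (ciSup_pos (f := fun _ => r' q) hq).symm
      _ ≤ _ := le_ciSup hbddD' q
  constructor
  · -- lower bound
    have hmain : cassinian D x y ≤ U * cassinian D' (f x) (f y) := by
      rw [hcassD]
      apply ciSup_le
      intro p
      apply iSup_prop_le _ (mul_nonneg hU0.le hcD'nn)
      intro hp
      obtain ⟨q, hpq, hqD', hL2, hU2⟩ := hbound p hp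
      have hid := hident p q hp hpq
      have h1 : r p ≤ r' q * U := by
        rw [← hid]
        exact mul_le_mul_of_nonneg_left hU2 (hr'nn q)
      calc r p ≤ r' q * U := h1
        _ ≤ cassinian D' (f x) (f y) * U :=
            mul_le_mul_of_nonneg_right (hr'le q hqD') hU0.le
        _ = U * cassinian D' (f x) (f y) := mul_comm _ _
    calc L * cassinian D x y
        ≤ L * (U * cassinian D' (f x) (f y)) :=
          mul_le_mul_of_nonneg_left hmain hL0.le
      _ = (L * U) * cassinian D' (f x) (f y) := by ring
      _ = cassinian D' (f x) (f y) := by rw [hLU, one_mul]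
  · -- upper bound
    rw [hcassD']
    apply ciSup_le
    intro q
    apply iSup_prop_le _ (mul_nonneg hU0.le hcDnn)
    intro hq
    obtain ⟨p, hpD, hpq⟩ := hsurj q hq
    obtain ⟨q2, hq2eq, _, hL2, hU2⟩ := hbound p hpD
    have hq2q : q2 = q := OnePoint.coe_eq_coe.1 (hq2eq.symm.trans hpq)
    subst hq2q
    have hid := hident p q2 hpD hpq
    have h1 : r' q2 * L ≤ r p := by
      rw [← hid]
      exact mul_le_mul_of_nonneg_left hL2 (hr'nn q2)
    calc r' q2 = r' q2 * (L * U) := by rw [hLU, mul_one]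
      _ = (r' q2 * L) * U := by ring
      _ ≤ r p * U := mul_le_mul_of_nonneg_right h1 hU0.le
      _ ≤ cassinian D x y * U :=
          mul_le_mul_of_nonneg_right (hrle p hpD) hU0.le
      _ = U * cassinian D x y := mul_comm _ _
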